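/- arXiv:2107.12644 — 8 statements merged into one kernel-verified Lean document; each statement's English description precedes it below -/
import Mathlib

section
/- Let D be an integral domain and S a torsion-free cancellative commutative monoid. Then the conductor of the monoid algebra D[S] into its complete integral closure equals the set of all elements of D[S] whose coefficients lie in the conductor f_D = (D : D̂) and whose exponents lie in the conductor f_S = (S : Ŝ); that is, f_{D[S]} = f_D[f_S]. -/
open scoped AddMonoidAlgebra

/-- The subset `P[H]` of the monoid algebra `F[G]`: elements all of whose (nonzero)
coefficients lie in `P ⊆ F` and all of whose exponents lie in `H ⊆ G`. -/
def withCoeffsAndExps (F G : Type*) [Field F] [AddCommGroup G] (P : Set F) (H : Set G) :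
    Set (AddMonoidAlgebra F G) :=
  {f | ∀ g : G, f.coeff g ≠ 0 → f.coeff g ∈ P ∧ g ∈ H}

universe u

lemma exists_ordered_embedding {G : Type u} [AddCommGroup G] (hG : IsAddTorsionFree G) :
    ∃ (L : Type u) (_ : AddCommGroup L) (_ : LinearOrder L) (_ : IsOrderedAddMonoid L) (φ : G →+ L), Function.Injective ⇑φ := by
  haveI : NoZeroSMulDivisors ℤ G := IsAddTorsionFree.to_noZeroSMulDivisors_int
  classical
  let S := nonZeroDivisors ℤ
  let Q := LocalizedModule S G
  letI : Module ℚ Q := Module.compHom Q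
    ((IsLocalization.algEquiv (nonZeroDivisors ℤ) (Localization S) ℚ).symm.toRingEquiv.toRingHom)
  let b := Module.Basis.ofVectorSpace ℚ Q
  let ι := Module.Basis.ofVectorSpaceIndex ℚ Q
  letI : LinearOrder ι := linearOrderOfSTO WellOrderingRel
  have hmk : Function.Injective ⇑(LocalizedModule.mkLinearMap S G) := by
    intro m m' h
    rw [LocalizedModule.mkLinearMap_apply, LocalizedModule.mkLinearMap_apply,
      LocalizedModule.mk_eq] at h
    obtain ⟨u, hu⟩ := h
    have hu' : (u : ℤ) • m = (u : ℤ) • m' := by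
      simpa [Submonoid.smul_def] using hu
    have : (u : ℤ) ≠ 0 := nonZeroDivisors.coe_ne_zero u
    exact smul_right_injective G this hu'
  refine ⟨Lex (ι →₀ ℚ), inferInstance, inferInstance, inferInstance, ?_, ?_⟩
  · exact
      { toFun := fun g => toLex (b.repr (LocalizedModule.mkLinearMap S G g))
        map_zero' := by simp
        map_add' := by intro x y; simp only [map_add, toLex_add] }
  · intro x y h
    simp only [AddMonoidHom.coe_mk, ZeroHom.coe_mk] at h
    exact hmk (b.repr.injective (toLex.injective h))


open scoped AddMonoidAlgebra

section Aux

variable {F G : Type*} [Field F] [AddCommGroup G]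

lemma ce_single {P : Set F} {H : Set G} {g : G} {e : F} (h : e ≠ 0 → e ∈ P ∧ g ∈ H) :
    AddMonoidAlgebra.single g e ∈ withCoeffsAndExps F G P H := by
  intro g' hg'
  classical
  rw [AddMonoidAlgebra.coeff_single, Finsupp.single_apply] at hg' ⊢
  by_cases hgg : g = g'
  · subst hgg
    rw [if_pos rfl] at hg' ⊢
    exact ⟨(h hg').1, (h hg').2⟩
  · rw [if_neg hgg] at hg'
    exact absurd rfl hg'

lemma ce_mul_mem {P₁ P₂ P : Set F} {H₁ H₂ H : Set G}
    (hP0 : (0 : F) ∈ P) (hPadd : ∀ a ∈ P, ∀ b ∈ P, a + b ∈ P)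
    (hP : ∀ a ∈ P₁, ∀ b ∈ P₂, a * b ∈ P) (hH : ∀ a ∈ H₁, ∀ b ∈ H₂, a + b ∈ H)
    {x y : AddMonoidAlgebra F G} (hx : x ∈ withCoeffsAndExps F G P₁ H₁)
    (hy : y ∈ withCoeffsAndExps F G P₂ H₂) : x * y ∈ withCoeffsAndExps F G P H := by
  classical
  intro g hg
  constructor
  · rw [AddMonoidAlgebra.coeff_mul, Finsupp.sum]
    refine Finset.sum_induction _ (· ∈ P) (fun a b ha hb => hPadd a ha b hb) hP0 ?_
    intro a₁ ha₁
    rw [Finsupp.sum]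
    refine Finset.sum_induction _ (· ∈ P) (fun a b ha hb => hPadd a ha b hb) hP0 ?_
    intro a₂ ha₂
    split
    · exact hP _ (hx a₁ (Finsupp.mem_support_iff.mp ha₁)).1 _
        (hy a₂ (Finsupp.mem_support_iff.mp ha₂)).1
    · exact hP0
  · have hmem : g ∈ (x * y).coeff.support := Finsupp.mem_support_iff.mpr hg
    obtain ⟨u, hu, v, hv, rfl⟩ := Finset.mem_add.mp (AddMonoidAlgebra.support_coeff_mul_subset x y hmem)
    exact hH u (hx u (Finsupp.mem_support_iff.mp hu)).2 v (hy v (Finsupp.mem_support_iff.mp hv)).2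

/-- `P[H]` is a subring when `P` is a subring and `H` an `AddSubmonoid`. -/
def ceSubring (P : Subring F) (H : AddSubmonoid G) : Subring (AddMonoidAlgebra F G) where
  carrier := withCoeffsAndExps F G (P : Set F) (H : Set G)
  zero_mem' := fun _ hg => absurd rfl hg
  one_mem' := by
    rw [AddMonoidAlgebra.one_def]
    exact ce_single fun _ => ⟨P.one_mem, H.zero_mem⟩
  add_mem' := by
    intro x y hx hy g hg
    rw [AddMonoidAlgebra.coeff_add, Finsupp.add_apply] at hg ⊢
    have h1 : x.coeff g ∈ (P : Set F) := by
      by_cases h : x.coeff g = 0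
      · rw [h]; exact P.zero_mem
      · exact (hx g h).1
    have h2 : y.coeff g ∈ (P : Set F) := by
      by_cases h : y.coeff g = 0
      · rw [h]; exact P.zero_mem
      · exact (hy g h).1
    refine ⟨P.add_mem h1 h2, ?_⟩
    by_cases h : x.coeff g = 0
    · exact (hy g (by rwa [h, zero_add] at hg)).2
    · exact (hx g h).2
  neg_mem' := by
    intro x hx g hg
    rw [AddMonoidAlgebra.coeff_neg, Finsupp.neg_apply] at hg ⊢
    have := hx g (by simpa using hg)
    exact ⟨P.neg_mem this.1, this.2⟩
  mul_mem' := by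
    intro x y hx hy
    exact ce_mul_mem P.zero_mem (fun a ha b hb => P.add_mem ha hb)
      (fun a ha b hb => P.mul_mem ha hb) (fun a ha b hb => H.add_mem ha hb) hx hy

/-- Almost integral elements are closed under subtraction. -/
lemma ai_sub {A : Type*} [CommRing A] [NoZeroDivisors A] (R : Subring A)
    {x z : A} (hx : ∃ c ∈ R, c ≠ 0 ∧ ∀ n : ℕ, c * x ^ n ∈ R)
    (hz : ∃ c ∈ R, c ≠ 0 ∧ ∀ n : ℕ, c * z ^ n ∈ R) :
    ∃ c ∈ R, c ≠ 0 ∧ ∀ n : ℕ, c * (x - z) ^ n ∈ R := by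
  obtain ⟨c₁, hc₁R, hc₁, h₁⟩ := hx
  obtain ⟨c₂, hc₂R, hc₂, h₂⟩ := hz
  refine ⟨c₁ * c₂, R.mul_mem hc₁R hc₂R, mul_ne_zero hc₁ hc₂, fun n => ?_⟩
  rw [sub_eq_add_neg, add_pow, Finset.mul_sum]
  refine Subring.sum_mem R fun k hk => ?_
  have heq : c₁ * c₂ * (x ^ k * (-z) ^ (n - k) * (n.choose k : A)) =
      (c₁ * x ^ k) * ((-1 : A) ^ (n - k) * ((c₂ * z ^ (n - k)) * (n.choose k : A))) := by
    rw [neg_pow]; ring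
  rw [heq]
  exact R.mul_mem (h₁ k) (R.mul_mem (R.pow_mem (R.neg_mem R.one_mem) _)
    (R.mul_mem (h₂ (n - k)) (natCast_mem R _)))

variable {L : Type*} [AddCommGroup L] [LinearOrder L] [IsOrderedAddMonoid L]

lemma lead_mul (φ : G →+ L) (hφ : Function.Injective ⇑φ) (p q : AddMonoidAlgebra F G) (a b : G)
    (hp : ∀ x ∈ p.coeff.support, φ x ≤ φ a) (hq : ∀ x ∈ q.coeff.support, φ x ≤ φ b) :
    (p * q).coeff (a + b) = p.coeff a * q.coeff b := by
  classical
  rw [AddMonoidAlgebra.coeff_mul, Finsupp.sum]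
  rw [Finset.sum_eq_single a]
  · rw [Finsupp.sum, Finset.sum_eq_single b]
    · rw [if_pos rfl]
    · intro y hy hne
      exact if_neg fun he => hne (add_left_cancel he)
    · intro hb
      rw [if_pos rfl, Finsupp.notMem_support_iff.mp hb, mul_zero]
  · intro u hu hne
    rw [Finsupp.sum]
    refine Finset.sum_eq_zero fun v hv => if_neg fun he => ?_
    have h1 : φ u < φ a := lt_of_le_of_ne (hp u hu) (fun h => hne (hφ h))
    have h2 : φ v ≤ φ b := hq v hv
    have : φ (u + v) < φ (a + b) := by
      rw [map_add, map_add]; exact add_lt_add_of_lt_of_le h1 h2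
    rw [he] at this
    exact lt_irrefl _ this
  · intro ha
    rw [Finsupp.sum]
    refine Finset.sum_eq_zero fun v _ => ?_
    simp [Finsupp.notMem_support_iff.mp ha]

lemma lead_pow (φ : G →+ L) (hφ : Function.Injective ⇑φ) (c y : AddMonoidAlgebra F G) (a b : G)
    (hc : ∀ x ∈ c.coeff.support, φ x ≤ φ a) (hy : ∀ x ∈ y.coeff.support, φ x ≤ φ b) (n : ℕ) :
    (∀ z ∈ (c * y ^ n).coeff.support, φ z ≤ φ (a + n • b)) ∧
      (c * y ^ n).coeff (a + n • b) = c.coeff a * y.coeff b ^ n := by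
  classical
  induction n with
  | zero =>
    constructor
    · simpa using hc
    · simp
  | succ n ih =>
    have h2 : c * y ^ (n + 1) = c * y ^ n * y := by ring
    have h3 : a + (n + 1) • b = a + n • b + b := by rw [succ_nsmul]; abel
    constructor
    · intro z hz
      rw [h2] at hz
      obtain ⟨u, hu, v, hv, rfl⟩ := Finset.mem_add.mp (AddMonoidAlgebra.support_coeff_mul_subset _ _ hz)
      rw [h3, map_add, map_add]
      exact add_le_add (ih.1 u hu) (hy v hv)
    · rw [h2, h3, lead_mul φ hφ _ _ _ _ ih.1 hy, ih.2, pow_succ, mul_assoc]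

end Aux

lemma hat_sub {D F G L : Type*} [CommRing D] [IsDomain D] [Field F] [Algebra D F]
    [IsFractionRing D F] [AddCommGroup G] [AddCommGroup L] [LinearOrder L] [IsOrderedAddMonoid L]
    (φ : G →+ L) (hφ : Function.Injective ⇑φ) (S : AddSubmonoid G) :
    ∀ (y c : AddMonoidAlgebra F G),
      c ∈ withCoeffsAndExps F G (Set.range (algebraMap D F)) S → c ≠ 0 →
      (∀ n : ℕ, c * y ^ n ∈ withCoeffsAndExps F G (Set.range (algebraMap D F)) S) →
      y ∈ withCoeffsAndExps F G
        {x : F | ∃ c : D, c ≠ 0 ∧ ∀ n : ℕ, algebraMap D F c * x ^ n ∈ Set.range (algebraMap D F)}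
        {x : G | ∃ c ∈ S, ∀ n : ℕ, c + n • x ∈ S} := by
  classical
  haveI : UniqueSums G := UniqueSums.of_injective_addHom φ.toAddHom hφ inferInstance
  have hDSeq : (↑(ceSubring (algebraMap D F).range S) : Set (AddMonoidAlgebra F G)) =
      withCoeffsAndExps F G (Set.range (algebraMap D F)) S := by
    show withCoeffsAndExps F G ((algebraMap D F).range : Set F) (S : Set G) = _
    congr 1
  suffices H : ∀ (N : ℕ) (y c : AddMonoidAlgebra F G), y.coeff.support.card ≤ N →
      c ∈ withCoeffsAndExps F G (Set.range (algebraMap D F)) S → c ≠ 0 →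
      (∀ n : ℕ, c * y ^ n ∈ withCoeffsAndExps F G (Set.range (algebraMap D F)) S) →
      y ∈ withCoeffsAndExps F G
        {x : F | ∃ c : D, c ≠ 0 ∧ ∀ n : ℕ, algebraMap D F c * x ^ n ∈ Set.range (algebraMap D F)}
        {x : G | ∃ c ∈ S, ∀ n : ℕ, c + n • x ∈ S} by
    exact fun y c h1 h2 h3 => H y.coeff.support.card y c le_rfl h1 h2 h3
  intro N
  induction N with
  | zero =>
    intro y c hcard _ _ _
    have hy : y = 0 := by
      rw [← AddMonoidAlgebra.coeff_eq_zero, ← Finsupp.support_eq_empty, ← Finset.card_eq_zero]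
      omega
    subst hy
    intro g hg
    exact absurd rfl hg
  | succ N ih =>
    intro y c hcard hcDS hc0 hn
    by_cases hy0 : y = 0
    · subst hy0; intro g hg; exact absurd rfl hg
    have hysupp : y.coeff.support.Nonempty :=
        Finsupp.support_nonempty_iff.mpr (mt AddMonoidAlgebra.coeff_eq_zero.mp hy0)
    have hcsupp : c.coeff.support.Nonempty :=
        Finsupp.support_nonempty_iff.mpr (mt AddMonoidAlgebra.coeff_eq_zero.mp hc0)
    obtain ⟨b, hb, hbmax⟩ := Finset.exists_max_image y.coeff.support φ hysupp
    obtain ⟨a, ha, hamax⟩ := Finset.exists_max_image c.coeff.support φ hcsupp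
    have hca : c.coeff a ≠ 0 := Finsupp.mem_support_iff.mp ha
    have hyb : y.coeff b ≠ 0 := Finsupp.mem_support_iff.mp hb
    have key : ∀ n : ℕ, (c * y ^ n).coeff (a + n • b) = c.coeff a * y.coeff b ^ n :=
      fun n => (lead_pow φ hφ c y a b hamax hbmax n).2
    have hterm : ∀ n : ℕ,
        c.coeff a * y.coeff b ^ n ∈ Set.range (algebraMap D F) ∧ a + n • b ∈ S := by
      intro n
      have hne : c.coeff a * y.coeff b ^ n ≠ 0 := mul_ne_zero hca (pow_ne_zero _ hyb)
      have := hn n (a + n • b) (by rw [key n]; exact hne)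
      rwa [key n] at this
    have haS : a ∈ (S : Set G) := (hcDS a hca).2
    have hbhatS : b ∈ {x : G | ∃ c ∈ S, ∀ n : ℕ, c + n • x ∈ S} :=
      ⟨a, haS, fun n => (hterm n).2⟩
    have hybhatD : y.coeff b ∈ {x : F | ∃ c : D, c ≠ 0 ∧
        ∀ n : ℕ, algebraMap D F c * x ^ n ∈ Set.range (algebraMap D F)} := by
      obtain ⟨c₀, hc₀⟩ := (hcDS a hca).1
      refine ⟨c₀, fun h => hca (by rw [← hc₀, h, map_zero]), fun n => ?_⟩
      rw [hc₀]; exact (hterm n).1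
    set m : AddMonoidAlgebra F G := AddMonoidAlgebra.single b (y.coeff b) with hm
    have hmAI : ∃ c' ∈ (ceSubring (algebraMap D F).range S : Subring (AddMonoidAlgebra F G)),
        c' ≠ 0 ∧ ∀ n : ℕ, c' * m ^ n ∈ ceSubring (algebraMap D F).range S := by
      refine ⟨AddMonoidAlgebra.single a (c.coeff a), ?_, fun h => hca ?_, fun n => ?_⟩
      · show _ ∈ withCoeffsAndExps F G _ _
        exact ce_single fun _ => ⟨(hcDS a hca).1, haS⟩
      · have h' : AddMonoidAlgebra.single a (c.coeff a) = 0 := h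
        simpa [AddMonoidAlgebra.single_eq_zero] using h'
      · show _ ∈ withCoeffsAndExps F G _ _
        have heq : AddMonoidAlgebra.single a (c.coeff a) * m ^ n =
            AddMonoidAlgebra.single (a + n • b) (c.coeff a * y.coeff b ^ n) := by
          rw [hm, AddMonoidAlgebra.single_pow, AddMonoidAlgebra.single_mul_single]
        rw [heq]
        exact ce_single fun _ => ⟨(hterm n).1, (hterm n).2⟩
    have hyAI : ∃ c' ∈ (ceSubring (algebraMap D F).range S : Subring (AddMonoidAlgebra F G)),
        c' ≠ 0 ∧ ∀ n : ℕ, c' * y ^ n ∈ ceSubring (algebraMap D F).range S := by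
      refine ⟨c, ?_, hc0, fun n => ?_⟩
      · show _ ∈ withCoeffsAndExps F G _ _; exact hcDS
      · show _ ∈ withCoeffsAndExps F G _ _; exact hn n
    obtain ⟨c', hc'DS, hc'0, hn'⟩ := ai_sub _ hyAI hmAI
    have hsub : y - m = y.erase b :=
      sub_eq_of_eq_add' (AddMonoidAlgebra.single_add_erase b y).symm
    have hcard' : (y - m).coeff.support.card ≤ N := by
      rw [hsub, AddMonoidAlgebra.coeff_erase, Finsupp.support_erase]
      have := Finset.card_erase_of_mem hb
      omega
    have hy' := ih (y - m) c' hcard' hc'DS hc'0 hn'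
    intro g hg
    by_cases hgb : g = b
    · subst hgb; exact ⟨hybhatD, hbhatS⟩
    · have hgeq : (y - m).coeff g = y.coeff g := by
        rw [hsub, AddMonoidAlgebra.coeff_erase, Finsupp.erase_ne hgb]
      have := hy' g (by rw [hgeq]; exact hg)
      rwa [hgeq] at this

/-- Let `D` be an integral domain with quotient field `F`, and `S` a torsion-free
cancellative commutative monoid with quotient group `G` (realized as a submonoid of
the abelian group `G`).  Inside the monoid algebra `F[G]`, the conductor
`f_{D[S]} = (D[S] : \widehat{D[S]})` of the monoid algebra `D[S]` equals
`f_D[f_S]`, the set of elements with coefficients in the conductor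
`f_D = (D : D̂)` and exponents in the conductor `f_S = (S : Ŝ)`. -/
theorem stmt0 {D F G : Type*} [CommRing D] [IsDomain D] [Field F] [Algebra D F]
    [IsFractionRing D F] [AddCommGroup G] (hG : ∀ g : G, g ≠ 0 → ¬IsOfFinAddOrder g)
    (S : AddSubmonoid G)
    -- the image of `D` in its quotient field
    (D' : Set F) (hD' : D' = Set.range (algebraMap D F))
    -- the complete integral closure of `D` (inside `F`)
    (hatD : Set F) (hhatD : hatD = {x : F | ∃ c : D, c ≠ 0 ∧
      ∀ n : ℕ, algebraMap D F c * x ^ n ∈ D'})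
    -- the conductor of `D`
    (fD : Set F) (hfD : fD = {d : F | ∀ e ∈ hatD, d * e ∈ D'})
    -- the complete integral closure of `S` (inside its quotient group `G`)
    (hatS : Set G) (hhatS : hatS = {x : G | ∃ c ∈ S, ∀ n : ℕ, c + n • x ∈ S})
    -- the conductor of `S`
    (fS : Set G) (hfS : fS = {g : G | ∀ s ∈ hatS, g + s ∈ S})
    -- the monoid algebra `D[S]` inside `F[G]`
    (DS : Set (AddMonoidAlgebra F G)) (hDS : DS = withCoeffsAndExps F G D' S)
    -- the complete integral closure of `D[S]`
    (hatDS : Set (AddMonoidAlgebra F G)) (hhatDS : hatDS = {x : AddMonoidAlgebra F G |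
      ∃ c ∈ DS, c ≠ 0 ∧ ∀ n : ℕ, c * x ^ n ∈ DS}) :
    {x : AddMonoidAlgebra F G | ∀ y ∈ hatDS, x * y ∈ DS} = withCoeffsAndExps F G fD fS := by
  obtain ⟨L, _, _, _, φ, hφ⟩ := exists_ordered_embedding (IsAddTorsionFree.of_not_isOfFinAddOrder hG)
  subst hD' hhatD hfD hhatS hfS hDS hhatDS
  have hinj : Function.Injective (algebraMap D F) := IsFractionRing.injective D F
  ext x
  simp only [Set.mem_setOf_eq]
  constructor
  · intro hx g hg
    constructor
    · -- coefficient in the conductor of `D`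
      intro e he
      by_cases he0 : e = 0
      · exact ⟨0, by rw [he0, mul_zero, map_zero]⟩
      obtain ⟨c₀, hc₀0, hc₀⟩ := he
      have hA : algebraMap D F c₀ ≠ 0 := fun h => hc₀0 (hinj (by rw [h, map_zero]))
      have hy₁ : x * AddMonoidAlgebra.single (0 : G) e ∈
          withCoeffsAndExps F G (Set.range (algebraMap D F)) S := by
        refine hx _ ⟨AddMonoidAlgebra.single (0 : G) (algebraMap D F c₀), ?_, ?_, fun n => ?_⟩
        · exact ce_single fun _ => ⟨⟨c₀, rfl⟩, S.zero_mem⟩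
        · intro h
          have h' : AddMonoidAlgebra.single (0 : G) (algebraMap D F c₀) = 0 := h
          rw [AddMonoidAlgebra.single_eq_zero] at h'
          exact hA h'
        · have heq : AddMonoidAlgebra.single (0 : G) (algebraMap D F c₀) *
              AddMonoidAlgebra.single (0 : G) e ^ n =
              AddMonoidAlgebra.single (0 : G) (algebraMap D F c₀ * e ^ n) := by
            rw [AddMonoidAlgebra.single_pow, smul_zero, AddMonoidAlgebra.single_mul_single,
              add_zero]
          rw [heq]
          exact ce_single fun _ => ⟨hc₀ n, S.zero_mem⟩
      have hval : (x * AddMonoidAlgebra.single (0 : G) e).coeff g = x.coeff g * e := by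
        rw [AddMonoidAlgebra.coeff_mul_single_apply, neg_zero, add_zero]
      have hne : (x * AddMonoidAlgebra.single (0 : G) e).coeff g ≠ 0 := by
        rw [hval]; exact mul_ne_zero hg he0
      have := (hy₁ g hne).1
      rwa [hval] at this
    · -- exponent in the conductor of `S`
      intro s hs
      obtain ⟨t, htS, htn⟩ := hs
      have hy₂ : x * AddMonoidAlgebra.single s (1 : F) ∈
          withCoeffsAndExps F G (Set.range (algebraMap D F)) S := by
        refine hx _ ⟨AddMonoidAlgebra.single t (1 : F), ?_, ?_, fun n => ?_⟩
        · exact ce_single fun _ => ⟨⟨1, map_one _⟩, htS⟩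
        · intro h
          have h' : AddMonoidAlgebra.single t (1 : F) = 0 := h
          rw [AddMonoidAlgebra.single_eq_zero] at h'
          exact one_ne_zero h'
        · have heq : AddMonoidAlgebra.single t (1 : F) *
              AddMonoidAlgebra.single s (1 : F) ^ n =
              AddMonoidAlgebra.single (t + n • s) (1 : F) := by
            rw [AddMonoidAlgebra.single_pow, one_pow, AddMonoidAlgebra.single_mul_single,
              mul_one]
          rw [heq]
          exact ce_single fun _ => ⟨⟨1, map_one _⟩, htn n⟩
      have hval : (x * AddMonoidAlgebra.single s (1 : F)).coeff (g + s) = x.coeff g := by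
        rw [AddMonoidAlgebra.coeff_mul_single_apply, add_neg_cancel_right, mul_one]
      have hne : (x * AddMonoidAlgebra.single s (1 : F)).coeff (g + s) ≠ 0 := by
        rw [hval]; exact hg
      exact (hy₂ (g + s) hne).2
  · intro hx y hy
    obtain ⟨c, hcDS, hc0, hn⟩ := hy
    have hyce := hat_sub φ hφ S y c hcDS hc0 hn
    refine ce_mul_mem ?_ ?_ ?_ ?_ hx hyce
    · exact ⟨0, map_zero _⟩
    · rintro a ⟨a₀, rfl⟩ b ⟨b₀, rfl⟩
      exact ⟨a₀ + b₀, by rw [map_add]⟩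
    · exact fun a ha b hb => ha b hb
    · exact fun a ha b hb => ha b hb
end

section
/- Let K be a field and S a numerical monoid. Then the complete integral closure of the monoid algebra K[S] is the polynomial ring K[X] (i.e., K[ℕ₀]). -/
open Polynomial

/-- Let `K` be a field and `S` a numerical monoid (a submonoid of `ℕ₀` with finite
complement). Then the complete integral closure of the monoid algebra `K[S]`
(computed inside the quotient field `K(X)`) is the polynomial ring `K[X]`. -/
theorem stmt1 (K : Type*) [Field K] (S : AddSubmonoid ℕ) (hS : ((S : Set ℕ)ᶜ).Finite) :
    {x : RatFunc K | ∃ c : Polynomial K, c ≠ 0 ∧ (∀ n : ℕ, n ∉ S → c.coeff n = 0) ∧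
        ∀ n : ℕ, ∃ d : Polynomial K, (∀ k : ℕ, k ∉ S → d.coeff k = 0) ∧
          algebraMap (Polynomial K) (RatFunc K) c * x ^ n =
            algebraMap (Polynomial K) (RatFunc K) d}
      = Set.range (algebraMap (Polynomial K) (RatFunc K)) := by
  ext x
  constructor
  · rintro ⟨c, hc0, -, hd⟩
    -- x is almost integral; show denom is a unit
    have hden : x.denom = 1 := by
      by_contra hden
      have hmon := RatFunc.monic_denom x
      have hdeg : 1 ≤ x.denom.natDegree := by
        rcases Nat.eq_zero_or_pos x.denom.natDegree with h0 | h1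
        · exact absurd (hmon.natDegree_eq_zero.mp h0) hden
        · exact h1
      set n := c.natDegree + 1 with hn
      obtain ⟨d, -, hcd⟩ := hd n
      -- c * num ^ n = d * denom ^ n
      have key : c * x.num ^ n = d * x.denom ^ n := by
        apply RatFunc.algebraMap_injective K
        push_cast [map_mul, map_pow]
        calc (algebraMap K[X] (RatFunc K)) c * (algebraMap K[X] (RatFunc K)) x.num ^ n
            = ((algebraMap K[X] (RatFunc K)) c * x ^ n) * (algebraMap K[X] (RatFunc K)) x.denom ^ n := by
              have hd0 : (algebraMap K[X] (RatFunc K)) x.denom ≠ 0 :=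
                RatFunc.algebraMap_ne_zero (RatFunc.denom_ne_zero x)
              have hx : (algebraMap K[X] (RatFunc K)) x.num
                  = x * (algebraMap K[X] (RatFunc K)) x.denom :=
                (div_eq_iff hd0).mp (RatFunc.num_div_denom x)
              rw [hx, mul_pow]; ring
          _ = (algebraMap K[X] (RatFunc K)) d * (algebraMap K[X] (RatFunc K)) x.denom ^ n := by
              rw [hcd]
      have hdvd : x.denom ^ n ∣ c := by
        have hcop : IsCoprime (x.denom ^ n) (x.num ^ n) :=
          ((RatFunc.isCoprime_num_denom x).symm.pow)
        exact hcop.dvd_of_dvd_mul_right ⟨d, by linear_combination key⟩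
      have := Polynomial.natDegree_le_of_dvd hdvd hc0
      rw [Polynomial.natDegree_pow] at this
      have : n ≤ n * x.denom.natDegree := Nat.le_mul_of_pos_right n hdeg
      omega
    refine ⟨x.num, ?_⟩
    have := RatFunc.num_div_denom x
    rw [hden, map_one, div_one] at this
    exact this
  · rintro ⟨p, rfl⟩
    classical
    set N := (hS.toFinset.sup id) + 1 with hN
    have hNmem : ∀ k, N ≤ k → k ∈ S := by
      intro k hk
      by_contra hkS
      have : k ∈ hS.toFinset := by simp [hkS]
      have := Finset.le_sup (f := id) this
      simp only [id] at this
      omega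
    refine ⟨X ^ N, pow_ne_zero _ X_ne_zero, ?_, ?_⟩
    · intro n hn
      rw [Polynomial.coeff_X_pow]
      have : n ≠ N := fun h => hn (h ▸ hNmem N le_rfl)
      simp [this]
    · intro n
      refine ⟨X ^ N * p ^ n, ?_, by push_cast [map_mul, map_pow]; ring⟩
      intro k hk
      rw [Polynomial.coeff_X_pow_mul']
      have : ¬ N ≤ k := fun h => hk (hNmem k h)
      simp [this]
end

section
/- Let K be a field and S a numerical monoid with Frobenius number f(S) = max(ℕ₀ \ S). Then the conductor (K[S] : K[X]) equals K[f_S], the K-span of the monomials X^n with n > f(S). -/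
open Polynomial

/-- Let `K` be a field and `S` a numerical monoid with Frobenius number
`F = max(ℕ₀ \ S)`. Then the conductor `(K[S] : K[X])`, computed inside the quotient
field `K(X)`, equals `K[f_S]`, the `K`-span of the monomials `X^n` with `n > F`. -/
theorem stmt2 (K : Type*) [Field K] (S : AddSubmonoid ℕ) (hS : ((S : Set ℕ)ᶜ).Finite)
    (F : ℕ) (hF : F ∉ S) (hFmax : ∀ n : ℕ, F < n → n ∈ S) :
    {x : RatFunc K | ∀ p : Polynomial K, ∃ q : Polynomial K,
        (∀ n : ℕ, n ∉ S → q.coeff n = 0) ∧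
          x * algebraMap (Polynomial K) (RatFunc K) p =
            algebraMap (Polynomial K) (RatFunc K) q}
      = {x : RatFunc K | ∃ q : Polynomial K, (∀ n : ℕ, n ≤ F → q.coeff n = 0) ∧
          x = algebraMap (Polynomial K) (RatFunc K) q} := by
  ext x
  simp only [Set.mem_setOf_eq]
  constructor
  · intro h
    obtain ⟨q₀, hq₀, hx⟩ := h 1
    rw [map_one, mul_one] at hx
    refine ⟨q₀, fun n hn => ?_, hx⟩
    obtain ⟨q, hq, hxq⟩ := h (X ^ (F - n))
    rw [hx, ← map_mul] at hxq
    have hq0 : q₀ * X ^ (F - n) = q := RatFunc.algebraMap_injective K hxq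
    have this1 : F = n + (F - n) := by omega
    have hc : (q₀ * X ^ (F - n)).coeff (n + (F - n)) = 0 := by
      rw [← this1, hq0]; exact hq F hF
    rwa [Polynomial.coeff_mul_X_pow] at hc
  · rintro ⟨q, hq, rfl⟩
    intro p
    refine ⟨q * p, fun n hn => ?_, (map_mul _ _ _).symm⟩
    have hnF : n ≤ F := by
      by_contra h'
      exact hn (hFmax n (lt_of_not_ge h'))
    rw [coeff_mul]
    apply Finset.sum_eq_zero
    rintro ⟨i, j⟩ hij
    rw [Finset.HasAntidiagonal.mem_antidiagonal] at hij
    rw [hq i (by omega), zero_mul]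
end

section
/- Let K be a Hilbertian field, a_0, …, a_n ∈ K with a_0 ≠ 0, and m > n an integer. Then there exists y ∈ K \ {0} such that the polynomial a_0 + a_1 X + ⋯ + a_n X^n + (1/y)·X^m is irreducible in K[X]. Consequently, there are infinitely many irreducible polynomials in K[X] with prescribed coefficients a_0, …, a_n in degrees 0 through n. -/
open Polynomial

/-- A field `K` is Hilbertian: for every polynomial `f ∈ K[Y][X]` that is irreducible
over the rational function field `K(Y)` and every nonzero `g ∈ K[Y]`, there exists
`y ∈ K` with `g(y) ≠ 0` such that the specialization `f(y, X)` is irreducible in `K[X]`. -/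
def IsHilbertianField (K : Type*) [Field K] : Prop :=
  ∀ f : Polynomial (Polynomial K),
    Irreducible (f.map (algebraMap (Polynomial K) (RatFunc K))) →
      ∀ g : Polynomial K, g ≠ 0 →
        ∃ y : K, g.eval y ≠ 0 ∧ Irreducible (f.map (Polynomial.evalRingHom y))

lemma key_aux {K : Type*} [Field K] (hK : IsHilbertianField K) (n : ℕ) (a : ℕ → K)
    (h0 : a 0 ≠ 0) (m : ℕ) (hm : n < m) :
    ∃ y : K, y ≠ 0 ∧
      Irreducible ((∑ i ∈ Finset.range (n + 1), Polynomial.C (a i) * Polynomial.X ^ i) +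
        Polynomial.C y⁻¹ * Polynomial.X ^ m) := by
  classical
  set A : (Polynomial K)[X] := ∑ i ∈ Finset.range (n + 1), C (C (a i)) * X ^ i with hA
  set f : (Polynomial K)[X] := C X * A + X ^ m with hf
  have hAdeg : A.natDegree ≤ n := by
    apply natDegree_sum_le_of_forall_le
    intro i hi
    exact le_trans (natDegree_C_mul_X_pow_le _ _) (Nat.lt_succ_iff.mp (Finset.mem_range.mp hi))
  have hCAdeg : (C (X : Polynomial K) * A).natDegree ≤ n := by
    refine le_trans (natDegree_mul_le) ?_
    simpa using hAdeg
  have hCAdeg' : (C (X : Polynomial K) * A).degree < (m : ℕ∞) := by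
    calc (C (X : Polynomial K) * A).degree ≤ ((C (X : Polynomial K) * A).natDegree : WithBot ℕ) :=
          degree_le_natDegree
      _ < m := by exact_mod_cast lt_of_le_of_lt hCAdeg hm
  have hmonic : f.Monic := by
    rw [hf, add_comm]
    exact monic_X_pow_add hCAdeg'
  have hfdeg : f.natDegree = m := by
    rw [hf, add_comm]
    rw [natDegree_add_eq_left_of_degree_lt (by rwa [degree_X_pow]), natDegree_X_pow]
  -- coefficients of A
  have hAcoeff : ∀ i, i ≤ n → A.coeff i = C (a i) := by
    intro i hi
    rw [hA, finset_sum_coeff]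
    simp only [coeff_C_mul, coeff_X_pow, mul_ite, mul_one, mul_zero]
    rw [Finset.sum_ite_eq (Finset.range (n+1)) i (fun j => C (a j))]
    simp [Nat.lt_succ_iff.mpr hi]
  have hfcoeff : ∀ i, i < m → f.coeff i = X * A.coeff i := by
    intro i hi
    rw [hf, coeff_add, coeff_C_mul, coeff_X_pow, if_neg (Nat.ne_of_lt hi), add_zero]
  -- Eisenstein
  have hXprime : Prime (X : Polynomial K) := prime_X
  have hP : (Ideal.span {(X : Polynomial K)}).IsPrime :=
    (Ideal.span_singleton_prime X_ne_zero).mpr hXprime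
  have hEis : f.IsEisensteinAt (Ideal.span {(X : Polynomial K)}) := by
    constructor
    · rw [hmonic.leadingCoeff]
      intro h
      exact hXprime.not_unit (isUnit_of_dvd_one (Ideal.mem_span_singleton.mp h))
    · intro i hi
      rw [hfdeg] at hi
      rw [hfcoeff i hi]
      exact Ideal.mem_span_singleton.mpr (dvd_mul_right _ _)
    · rw [hfcoeff 0 (lt_of_le_of_lt (Nat.zero_le n) hm), hAcoeff 0 (Nat.zero_le n)]
      rw [Ideal.span_singleton_pow, Ideal.mem_span_singleton]
      intro h
      rw [pow_two] at h
      have : (X : Polynomial K) ∣ C (a 0) := (mul_dvd_mul_iff_left X_ne_zero).mp h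
      rw [X_dvd_iff, coeff_C_zero] at this
      exact h0 this
  have hfirr : Irreducible f := by
    refine hEis.irreducible hP hmonic.isPrimitive ?_
    rw [hfdeg]; omega
  have hfirrmap : Irreducible (f.map (algebraMap (Polynomial K) (RatFunc K))) :=
    (hmonic.irreducible_iff_irreducible_map_fraction_map).mp hfirr
  obtain ⟨y, hy, hirr⟩ := hK f hfirrmap X X_ne_zero
  rw [eval_X] at hy
  refine ⟨y, hy, ?_⟩
  have hmap : f.map (evalRingHom y) =
      C y * (∑ i ∈ Finset.range (n + 1), C (a i) * X ^ i) + X ^ m := by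
    rw [hf, hA]
    simp only [Polynomial.map_add, Polynomial.map_mul, Polynomial.map_pow,
      Polynomial.map_sum, map_C, map_X, coe_evalRingHom, eval_X, eval_C]
  rw [hmap] at hirr
  have hassoc : Associated (C y * (∑ i ∈ Finset.range (n + 1), C (a i) * X ^ i) + X ^ m)
      ((∑ i ∈ Finset.range (n + 1), C (a i) * X ^ i) + C y⁻¹ * X ^ m) := by
    have hu : IsUnit (C y⁻¹ : Polynomial K) := isUnit_C.mpr (IsUnit.mk0 _ (inv_ne_zero hy))
    refine Associated.symm ⟨hu.unit⁻¹, ?_⟩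
    have : ((hu.unit⁻¹ : (Polynomial K)ˣ) : Polynomial K) = C y := by
      rw [← Units.mul_eq_one_iff_inv_eq, IsUnit.unit_spec, ← C_mul, inv_mul_cancel₀ hy, map_one]
    rw [this, add_mul, mul_comm _ (C y), mul_right_comm, ← C_mul, inv_mul_cancel₀ hy, map_one,
      one_mul]
  exact hassoc.irreducible hirr


/-- Let `K` be a Hilbertian field, `a_0, …, a_n ∈ K` with `a_0 ≠ 0`, and `m > n`.
Then there exists `y ∈ K \ {0}` such that `a_0 + a_1 X + ⋯ + a_n X^n + (1/y)·X^m`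
is irreducible in `K[X]`. Consequently, there are infinitely many irreducible
polynomials in `K[X]` whose coefficient at `X^i` equals `a_i` for `i ∈ [0, n]`. -/
theorem stmt8 (K : Type*) [Field K] (hK : IsHilbertianField K) (n : ℕ) (a : ℕ → K)
    (h0 : a 0 ≠ 0) (m : ℕ) (hm : n < m) :
    (∃ y : K, y ≠ 0 ∧
      Irreducible ((∑ i ∈ Finset.range (n + 1), Polynomial.C (a i) * Polynomial.X ^ i) +
        Polynomial.C y⁻¹ * Polynomial.X ^ m)) ∧
    {p : Polynomial K | Irreducible p ∧ ∀ i : ℕ, i ≤ n → p.coeff i = a i}.Infinite := by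
  classical
  refine ⟨key_aux hK n a h0 m hm, ?_⟩
  have H : ∀ k : ℕ, ∃ p : Polynomial K, p.natDegree = n + 1 + k ∧ Irreducible p ∧
      ∀ i : ℕ, i ≤ n → p.coeff i = a i := by
    intro k
    obtain ⟨y, hy, hirr⟩ := key_aux hK n a h0 (n + 1 + k) (by omega)
    set S : Polynomial K := ∑ i ∈ Finset.range (n + 1), C (a i) * X ^ i with hS
    have hSdeg : S.natDegree ≤ n := by
      apply natDegree_sum_le_of_forall_le
      intro i hi
      exact le_trans (natDegree_C_mul_X_pow_le _ _) (Nat.lt_succ_iff.mp (Finset.mem_range.mp hi))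
    have hyin : (y⁻¹ : K) ≠ 0 := inv_ne_zero hy
    have htd : (C y⁻¹ * X ^ (n + 1 + k)).natDegree = n + 1 + k := natDegree_C_mul_X_pow _ _ hyin
    refine ⟨S + C y⁻¹ * X ^ (n + 1 + k), ?_, hirr, ?_⟩
    · rw [natDegree_add_eq_right_of_natDegree_lt (by omega : S.natDegree < _), htd]
    · intro i hi
      rw [coeff_add, hS, finset_sum_coeff]
      simp only [coeff_C_mul, coeff_X_pow, mul_ite, mul_one, mul_zero]
      rw [Finset.sum_ite_eq (Finset.range (n + 1)) i (fun j => a j),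
        if_pos (Finset.mem_range.mpr (Nat.lt_succ_iff.mpr hi)), if_neg (by omega : ¬ (i = n + 1 + k)), add_zero]
  choose g hdeg hgirr hgcoeff using H
  apply Set.infinite_of_injective_forall_mem (f := g)
  · intro k l hkl
    have : (g k).natDegree = (g l).natDegree := by rw [hkl]
    rw [hdeg, hdeg] at this
    omega
  · exact fun k => ⟨hgirr k, hgcoeff k⟩
end

section
/- Let S be an affine monoid (a finitely generated cancellative commutative monoid with torsion-free quotient group) whose complete integral closure Ŝ is factorial. Then Ŝ ≅ ℕ₀^s ⊕ ℤ^t for some non-negative integers s, t. -/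
variable {G : Type*} [AddCommGroup G]

/-- The complete integral closure `Ŝ = {x ∈ q(S) | ∃ c ∈ S, ∀ n, c + n·x ∈ S}` of a
submonoid `S` of an abelian group, computed inside the ambient group (any such `x`
automatically lies in the quotient group of `S`). -/
def addCompleteIntegralClosure (S : AddSubmonoid G) : AddSubmonoid G where
  carrier := {x | ∃ c ∈ S, ∀ n : ℕ, c + n • x ∈ S}
  zero_mem' := ⟨0, S.zero_mem, fun n => by simpa using S.zero_mem⟩
  add_mem' := by
    rintro x y ⟨c, hc, hcx⟩ ⟨d, hd, hdy⟩
    refine ⟨c + d, S.add_mem hc hd, fun n => ?_⟩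
    have h := S.add_mem (hcx n) (hdy n)
    have e : c + n • x + (d + n • y) = c + d + n • (x + y) := by rw [smul_add]; abel
    rwa [e] at h

/-- `p` divides `a` within the submonoid `S` (written additively). -/
def AddDvdIn (S : AddSubmonoid G) (p a : G) : Prop := ∃ c ∈ S, a = p + c

/-- `u` is a unit (invertible element) of the submonoid `S`. -/
def IsAddUnitIn (S : AddSubmonoid G) (u : G) : Prop := u ∈ S ∧ ∃ v ∈ S, u + v = 0

/-- `p` is a prime element of the submonoid `S`. -/
def IsAddPrimeIn (S : AddSubmonoid G) (p : G) : Prop :=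
  p ∈ S ∧ ¬ IsAddUnitIn S p ∧
    ∀ a ∈ S, ∀ b ∈ S, AddDvdIn S p (a + b) → AddDvdIn S p a ∨ AddDvdIn S p b

/-- A commutative cancellative monoid is factorial if every non-unit is a sum of
prime elements. -/
def IsFactorialAddMonoid (S : AddSubmonoid G) : Prop :=
  ∀ x ∈ S, ¬ IsAddUnitIn S x → ∃ l : Multiset G, (∀ p ∈ l, IsAddPrimeIn S p) ∧ l.sum = x

/-! ### Auxiliary development -/

/-- The subgroup of units of a submonoid of an abelian group. -/
def unitsIn (T : AddSubmonoid G) : AddSubgroup G where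
  carrier := {u | u ∈ T ∧ -u ∈ T}
  zero_mem' := ⟨T.zero_mem, by simpa using T.zero_mem⟩
  add_mem' := fun ha hb => ⟨T.add_mem ha.1 hb.1, by rw [neg_add]; exact T.add_mem ha.2 hb.2⟩
  neg_mem' := fun h => ⟨h.2, by simpa using h.1⟩

section Aux

variable {T : AddSubmonoid G}

lemma mem_unitsIn {u : G} : u ∈ unitsIn T ↔ u ∈ T ∧ -u ∈ T := Iff.rfl

lemma isAddUnitIn_iff {u : G} : IsAddUnitIn T u ↔ u ∈ unitsIn T := by
  constructor
  · rintro ⟨hu, v, hv, huv⟩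
    have hv' : v = -u := eq_neg_of_add_eq_zero_right huv
    exact ⟨hu, hv' ▸ hv⟩
  · rintro ⟨hu, hnu⟩
    exact ⟨hu, -u, hnu, by simp⟩

lemma unitsIn_le_monoid {u : G} (h : u ∈ unitsIn T) : u ∈ T := h.1

/-- A prime cannot divide a unit. -/
lemma not_prime_dvd_unit {p u : G} (hp : IsAddPrimeIn T p) (hu : u ∈ unitsIn T)
    (h : AddDvdIn T p u) : False := by
  obtain ⟨c, hc, rfl⟩ := h
  apply hp.2.1
  refine isAddUnitIn_iff.2 ⟨hp.1, ?_⟩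
  have h1 : c + -(p + c) ∈ T := T.add_mem hc hu.2
  have h2 : c + -(p + c) = -p := by abel
  rwa [h2] at h1

/-- If a prime divides a multiset sum of elements of `T`, it divides one of them. -/
lemma dvd_of_dvd_multiset_sum {p : G} (hp : IsAddPrimeIn T p) (l : Multiset G) :
    (∀ x ∈ l, x ∈ T) → AddDvdIn T p l.sum → ∃ x ∈ l, AddDvdIn T p x := by
  induction l using Multiset.induction with
  | empty =>
    intro _ h
    rw [Multiset.sum_zero] at h
    exact absurd h (fun h => not_prime_dvd_unit hp (zero_mem _) h)
  | cons q l ih =>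
    intro hmem hd
    rw [Multiset.sum_cons] at hd
    rcases hp.2.2 q (hmem q (Multiset.mem_cons_self q l)) l.sum
        (multiset_sum_mem l (fun x hx => hmem x (Multiset.mem_cons_of_mem hx))) hd with h | h
    · exact ⟨q, Multiset.mem_cons_self q l, h⟩
    · obtain ⟨x, hx, hdx⟩ := ih (fun y hy => hmem y (Multiset.mem_cons_of_mem hy)) h
      exact ⟨x, Multiset.mem_cons_of_mem hx, hdx⟩

/-- If a prime divides a prime, the two are associates. -/
lemma sub_mem_units_of_prime_dvd_prime {p q : G} (hp : IsAddPrimeIn T p)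
    (hq : IsAddPrimeIn T q) (h : AddDvdIn T p q) : q - p ∈ unitsIn T := by
  obtain ⟨c, hc, hqe⟩ := h
  rcases hq.2.2 p hp.1 c hc ⟨0, T.zero_mem, by rw [hqe, add_zero]⟩ with h1 | h1
  · obtain ⟨e, he, hpe⟩ := h1
    have hc' : q - p = c := by rw [hqe]; abel
    have he' : -(q - p) = e := by rw [hpe]; abel
    exact ⟨by rw [hc']; exact hc, by rw [he']; exact he⟩
  · obtain ⟨d, hd, hcd⟩ := h1
    exfalso
    rw [hqe] at hcd
    have h3 : c + 0 = c + (p + d) := by rw [add_zero]; nth_rewrite 1 [hcd]; abel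
    have h4 : -p = d := neg_eq_of_add_eq_zero_right (add_left_cancel h3).symm
    exact hp.2.1 (isAddUnitIn_iff.2 ⟨hp.1, by rw [h4]; exact hd⟩)

/-- If a prime divides a sum of primes, it is associate to one of them. -/
lemma prime_assoc_of_dvd_prime_sum {p : G} (hp : IsAddPrimeIn T p) (l : Multiset G)
    (hl : ∀ q ∈ l, IsAddPrimeIn T q) (h : AddDvdIn T p l.sum) :
    ∃ q ∈ l, q - p ∈ unitsIn T := by
  obtain ⟨x, hx, hd⟩ := dvd_of_dvd_multiset_sum hp l (fun y hy => (hl y hy).1) h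
  exact ⟨x, hx, sub_mem_units_of_prime_dvd_prime hp (hl x hx) hd⟩

/-- Uniqueness of factorization into primes, up to units, expressed as equality of
the multisets of classes modulo the unit group. -/
lemma uf_map_eq (l : Multiset G) : ∀ (l' : Multiset G),
    (∀ p ∈ l, IsAddPrimeIn T p) → (∀ p ∈ l', IsAddPrimeIn T p) →
    ∀ u ∈ unitsIn T, l.sum = l'.sum + u →
    l.map (fun x => (QuotientAddGroup.mk x : G ⧸ unitsIn T)) =
      l'.map (fun x => (QuotientAddGroup.mk x : G ⧸ unitsIn T)) := by
  classical
  induction l using Multiset.induction with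
  | empty =>
    intro l' _ hl' u hu hsum
    have hl0 : l' = 0 := by
      by_contra hne
      obtain ⟨q, hq⟩ := Multiset.exists_mem_of_ne_zero hne
      have hsplit : l'.sum = q + (l'.erase q).sum := by
        conv_lhs => rw [← Multiset.cons_erase hq]
        rw [Multiset.sum_cons]
      rw [Multiset.sum_zero, hsplit] at hsum
      have hmem : q + ((l'.erase q).sum + u) = 0 := by rw [← add_assoc]; exact hsum.symm
      have hunit : IsAddUnitIn T q :=
        ⟨(hl' q hq).1, (l'.erase q).sum + u,
          T.add_mem (multiset_sum_mem _ (fun x hx =>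
            (hl' x (Multiset.mem_of_mem_erase hx)).1)) hu.1, hmem⟩
      exact (hl' q hq).2.1 hunit
    subst hl0; simp
  | cons p s ih =>
    intro l' hl hl' u hu hsum
    have hp := hl p (Multiset.mem_cons_self p s)
    have hs : ∀ x ∈ s, IsAddPrimeIn T x := fun x hx => hl x (Multiset.mem_cons_of_mem hx)
    rw [Multiset.sum_cons] at hsum
    have hdvd : AddDvdIn T p (l'.sum + u) :=
      ⟨s.sum, multiset_sum_mem _ (fun x hx => (hs x hx).1), hsum.symm⟩
    rcases hp.2.2 l'.sum (multiset_sum_mem _ (fun x hx => (hl' x hx).1)) u hu.1 hdvd with hd | hd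
    · obtain ⟨q, hq, hqp⟩ := prime_assoc_of_dvd_prime_sum hp l' hl' hd
      have hsplit : l'.sum = q + (l'.erase q).sum := by
        conv_lhs => rw [← Multiset.cons_erase hq]
        rw [Multiset.sum_cons]
      rw [hsplit] at hsum
      have hsum2 : s.sum = (l'.erase q).sum + (u + (q - p)) := by
        apply add_left_cancel (a := p)
        rw [hsum]; abel
      have hrec := ih (l'.erase q) hs (fun x hx => hl' x (Multiset.mem_of_mem_erase hx))
        (u + (q - p)) (add_mem hu hqp) hsum2
      have hpq : (QuotientAddGroup.mk p : G ⧸ unitsIn T) = QuotientAddGroup.mk q :=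
        QuotientAddGroup.eq.2 (by rwa [neg_add_eq_sub])
      rw [Multiset.map_cons, hrec, hpq, ← Multiset.map_cons, Multiset.cons_erase hq]
    · exact absurd hd (fun hd => not_prime_dvd_unit hp hu hd)

lemma multiset_map_finset_sum {α β ι : Type*} (f : α → β) (st : Finset ι)
    (g : ι → Multiset α) : (∑ i ∈ st, g i).map f = ∑ i ∈ st, (g i).map f :=
  map_sum (Multiset.mapAddMonoidHom f) g st

end Aux

set_option maxHeartbeats 1000000 in
/-- Let `S` be an affine monoid (a finitely generated submonoid of some `ℤ^m`) whose
complete integral closure `Ŝ` is factorial. Then `Ŝ ≅ ℕ₀^s ⊕ ℤ^t` for some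
non-negative integers `s`, `t`. -/
theorem stmt10 (m : ℕ) (S : AddSubmonoid (Fin m → ℤ)) (hfg : S.FG)
    (hfact : IsFactorialAddMonoid (addCompleteIntegralClosure S)) :
    ∃ s t : ℕ, Nonempty (↥(addCompleteIntegralClosure S) ≃+ ((Fin s → ℕ) × (Fin t → ℤ))) := by
  classical
  set T := addCompleteIntegralClosure S with hTdef
  set U := unitsIn T with hUdef
  set π : (Fin m → ℤ) → (Fin m → ℤ) ⧸ U := fun x => QuotientAddGroup.mk x with hπdef
  obtain ⟨X, hX⟩ := hfg
  have hST : S ≤ T := fun x hx =>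
    ⟨x, hx, fun n => S.add_mem hx (nsmul_mem hx n)⟩
  -- every prime divides some generator
  have hgen : ∀ p, IsAddPrimeIn T p → ∃ x ∈ X, AddDvdIn T p x := by
    intro p hp
    obtain ⟨c, hc, hcp⟩ := hp.1
    have h1 : c + p ∈ S := by simpa using hcp 1
    rw [← hX] at h1
    obtain ⟨l, hlX, hlsum⟩ := AddSubmonoid.exists_multiset_of_mem_closure h1
    have hdvd : AddDvdIn T p l.sum := ⟨c, hST hc, by rw [hlsum]; abel⟩
    obtain ⟨x, hx, hd⟩ := dvd_of_dvd_multiset_sum hp l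
      (fun y hy => hST (hX ▸ AddSubmonoid.subset_closure (hlX y hy))) hdvd
    exact ⟨x, hlX x hx, hd⟩
  -- the set of classes of primes dividing a fixed element of T is finite
  have hDfin : ∀ x ∈ T, {c : (Fin m → ℤ) ⧸ U |
      ∃ q, IsAddPrimeIn T q ∧ AddDvdIn T q x ∧ π q = c}.Finite := by
    intro x hx
    by_cases hxu : IsAddUnitIn T x
    · convert Set.finite_empty
      ext c
      simp only [Set.mem_setOf_eq, Set.mem_empty_iff_false, iff_false]
      rintro ⟨q, hq, hd, -⟩
      exact not_prime_dvd_unit hq (isAddUnitIn_iff.1 hxu) hd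
    · obtain ⟨l, hl, hlsum⟩ := hfact x hx hxu
      apply Set.Finite.subset ((l.toFinset : Set (Fin m → ℤ)).toFinite.image π)
      rintro c ⟨q, hq, hd, rfl⟩
      obtain ⟨r, hr, hrq⟩ := prime_assoc_of_dvd_prime_sum hq l hl (hlsum ▸ hd)
      refine ⟨r, by simpa using hr, ?_⟩
      exact (QuotientAddGroup.eq.2 (by rwa [neg_add_eq_sub])).symm
  -- the set of classes of primes is finite
  set C := π '' {q | IsAddPrimeIn T q} with hCdef
  have hCfin : C.Finite := by
    apply Set.Finite.subset
      (Set.Finite.biUnion X.finite_toSet (fun x hx => hDfin x (hST (hX ▸ AddSubmonoid.subset_closure hx))))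
    rintro c ⟨q, hq, rfl⟩
    obtain ⟨x, hxX, hd⟩ := hgen q hq
    exact Set.mem_biUnion hxX ⟨q, hq, hd, rfl⟩
  -- choose representatives
  obtain ⟨s, ⟨e⟩⟩ : ∃ s : ℕ, Nonempty (C ≃ Fin s) := by
    haveI := hCfin.fintype
    exact ⟨Fintype.card C, ⟨Fintype.equivFin C⟩⟩
  have hrep : ∀ i : Fin s, ∃ q, IsAddPrimeIn T q ∧ π q = (e.symm i : (Fin m → ℤ) ⧸ U) := by
    intro i
    obtain ⟨q, hq, hπq⟩ := (e.symm i).2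
    exact ⟨q, hq, hπq⟩
  choose p hp hπp using hrep
  have hπinj : Function.Injective (fun i => π (p i)) := by
    intro i j hij
    simp only [hπp] at hij
    exact e.symm.injective (Subtype.ext hij)
  have hcomplete : ∀ q, IsAddPrimeIn T q → ∃ i, q - p i ∈ U := by
    intro q hq
    have hmem : π q ∈ C := ⟨q, hq, rfl⟩
    refine ⟨e ⟨π q, hmem⟩, ?_⟩
    have : π (p (e ⟨π q, hmem⟩)) = π q := by rw [hπp, Equiv.symm_apply_apply]
    rw [← neg_add_eq_sub]
    exact QuotientAddGroup.eq.1 this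
  -- coefficient uniqueness
  have hcoeff : ∀ (a b : Fin s → ℕ) (u v : Fin m → ℤ), u ∈ U → v ∈ U →
      (∑ i, a i • p i) + u = (∑ i, b i • p i) + v → a = b := by
    intro a b u v hu hv h
    set La : Multiset (Fin m → ℤ) := ∑ i, Multiset.replicate (a i) (p i) with hLa
    set Lb : Multiset (Fin m → ℤ) := ∑ i, Multiset.replicate (b i) (p i) with hLb
    have hsumLa : La.sum = ∑ i, a i • p i := by
      rw [hLa, Multiset.sum_sum]
      simp [Multiset.sum_replicate]
    have hsumLb : Lb.sum = ∑ i, b i • p i := by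
      rw [hLb, Multiset.sum_sum]
      simp [Multiset.sum_replicate]
    have hmemLa : ∀ q ∈ La, IsAddPrimeIn T q := by
      intro q hq
      rw [hLa, Multiset.mem_sum] at hq
      obtain ⟨i, -, hqi⟩ := hq
      rw [Multiset.eq_of_mem_replicate hqi]
      exact hp i
    have hmemLb : ∀ q ∈ Lb, IsAddPrimeIn T q := by
      intro q hq
      rw [hLb, Multiset.mem_sum] at hq
      obtain ⟨i, -, hqi⟩ := hq
      rw [Multiset.eq_of_mem_replicate hqi]
      exact hp i
    have h' : La.sum = Lb.sum + (v - u) := by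
      rw [hsumLa, hsumLb]
      have h2 : (∑ i, b i • p i) + (v - u) = ((∑ i, b i • p i) + v) - u := by abel
      rw [h2, ← h]; abel
    have hmaps := uf_map_eq La Lb hmemLa hmemLb (v - u) (sub_mem hv hu) h'
    have hmapLa : La.map π = ∑ i, Multiset.replicate (a i) (π (p i)) := by
      rw [hLa, multiset_map_finset_sum]
      simp [Multiset.map_replicate]
    have hmapLb : Lb.map π = ∑ i, Multiset.replicate (b i) (π (p i)) := by
      rw [hLb, multiset_map_finset_sum]
      simp [Multiset.map_replicate]
    rw [hmapLa, hmapLb] at hmaps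
    funext j
    have hca := congrArg (Multiset.count (π (p j))) hmaps
    rw [Multiset.count_sum', Multiset.count_sum'] at hca
    have hsimp : ∀ c : Fin s → ℕ,
        (∑ i, Multiset.count (π (p j)) (Multiset.replicate (c i) (π (p i)))) = c j := by
      intro c
      rw [Finset.sum_congr rfl (fun i _ => Multiset.count_replicate _ _ _)]
      calc (∑ i, if π (p i) = π (p j) then c i else 0)
          = ∑ i, if i = j then c i else 0 := by
            refine Finset.sum_congr rfl (fun i _ => ?_)
            congr 1
            simp only [eq_iff_iff]
            exact ⟨fun h => hπinj h, fun h => by rw [h]⟩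
        _ = c j := by simp
    rw [hsimp a, hsimp b] at hca
    exact hca
  -- existence of representations
  have hrepsum : ∀ l : Multiset (Fin m → ℤ), (∀ q ∈ l, IsAddPrimeIn T q) →
      ∃ (a : Fin s → ℕ) (u : Fin m → ℤ), u ∈ U ∧ l.sum = (∑ i, a i • p i) + u := by
    intro l
    induction l using Multiset.induction with
    | empty => exact fun _ => ⟨0, 0, zero_mem _, by simp⟩
    | cons q l ih =>
      intro hl
      obtain ⟨a, u, hu, hsum⟩ := ih (fun x hx => hl x (Multiset.mem_cons_of_mem hx))
      obtain ⟨i, hi⟩ := hcomplete q (hl q (Multiset.mem_cons_self q l))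
      refine ⟨a + Pi.single i 1, u + (q - p i), add_mem hu hi, ?_⟩
      have hsingle : ∑ j, (Pi.single i 1 : Fin s → ℕ) j • p j = p i := by
        rw [Finset.sum_congr rfl (fun j _ => by rw [Pi.single_apply, ite_smul, one_smul])]
        simp
      have hsplit : ∑ j, ((a + Pi.single i 1 : Fin s → ℕ)) j • p j = (∑ j, a j • p j) + p i := by
        simp only [Pi.add_apply, add_smul]
        rw [Finset.sum_add_distrib, hsingle]
      rw [Multiset.sum_cons, hsum, hsplit]
      abel
  -- the unit group is free of finite rank
  obtain ⟨t, bU⟩ := Submodule.basisOfPid (Pi.basisFun ℤ (Fin m)) (AddSubgroup.toIntSubmodule U)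
  let eU : ↥(AddSubgroup.toIntSubmodule U) ≃+ (Fin t → ℤ) :=
    (bU.repr ≪≫ₗ Finsupp.linearEquivFunOnFinite ℤ ℤ (Fin t)).toAddEquiv
  let eUM : ↥U ≃+ ↥(AddSubgroup.toIntSubmodule U) :=
    { toFun := fun x => ⟨x.1, x.2⟩
      invFun := fun x => ⟨x.1, x.2⟩
      left_inv := fun x => rfl
      right_inv := fun x => rfl
      map_add' := fun x y => rfl }
  -- the monoid hom (Fin s → ℕ) × U →+ T
  have hmemT : ∀ (a : Fin s → ℕ) (u : ↥U), (∑ i, a i • p i) + (u : Fin m → ℤ) ∈ T :=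
    fun a u => T.add_mem
      (AddSubmonoid.sum_mem T (fun i _ => nsmul_mem (hp i).1 _))
      u.2.1
  let φ : ((Fin s → ℕ) × ↥U) →+ ↥T :=
    { toFun := fun au => ⟨(∑ i, au.1 i • p i) + (au.2 : Fin m → ℤ), hmemT au.1 au.2⟩
      map_zero' := by ext; simp
      map_add' := by
        rintro ⟨a, u⟩ ⟨b, v⟩
        apply Subtype.ext
        show (∑ i, (a + b) i • p i) + ((u + v : ↥U) : Fin m → ℤ) =
          ((∑ i, a i • p i) + (u : Fin m → ℤ)) + ((∑ i, b i • p i) + (v : Fin m → ℤ))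
        rw [AddSubgroup.coe_add]
        simp only [Pi.add_apply, add_smul]
        rw [Finset.sum_add_distrib]
        abel }
  have hφinj : Function.Injective φ := by
    rintro ⟨a, u⟩ ⟨b, v⟩ h
    have h' : (∑ i, a i • p i) + (u : Fin m → ℤ) = (∑ i, b i • p i) + (v : Fin m → ℤ) :=
      congrArg Subtype.val h
    have hab : a = b := hcoeff a b u v u.2 v.2 h'
    subst hab
    have huv : (u : Fin m → ℤ) = v := add_left_cancel h'
    exact Prod.ext rfl (Subtype.ext huv)
  have hφsurj : Function.Surjective φ := by
    rintro ⟨x, hx⟩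
    by_cases hxu : IsAddUnitIn T x
    · refine ⟨⟨0, ⟨x, isAddUnitIn_iff.1 hxu⟩⟩, ?_⟩
      ext
      simp [φ]
    · obtain ⟨l, hl, hlsum⟩ := hfact x hx hxu
      obtain ⟨a, u, hu, hsum⟩ := hrepsum l hl
      refine ⟨⟨a, ⟨u, hu⟩⟩, ?_⟩
      ext
      simp only [φ, AddMonoidHom.coe_mk, ZeroHom.coe_mk]
      rw [← hlsum, hsum]
  refine ⟨s, t, ⟨((AddEquiv.ofBijective φ ⟨hφinj, hφsurj⟩).symm.trans
    (AddEquiv.prodCongr (AddEquiv.refl _) (eUM.trans eU)))⟩⟩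
end

section
/- Let S ⊆ T be a root extension of commutative cancellative monoids (for every t ∈ T there is n ∈ ℕ with n·t ∈ S). Then the map q ↦ q ∩ S is an inclusion-preserving bijection from the prime ideals of T onto the prime ideals of S. -/
variable {T : Type*} [AddCancelCommMonoid T]

/-- A prime ideal of a commutative cancellative monoid `T`: an ideal (`I + T ⊆ I`)
whose complement is a submonoid. -/
def IsMonoidPrimeIdeal (I : Set T) : Prop :=
  (∀ a ∈ I, ∀ b : T, a + b ∈ I) ∧ (0 : T) ∉ I ∧ ∀ a b : T, a + b ∈ I → a ∈ I ∨ b ∈ I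

/-- A prime ideal of a submonoid `S ⊆ T` (realized as a subset of `T` contained
in `S`). -/
def IsMonoidPrimeIdealOn (S : AddSubmonoid T) (I : Set T) : Prop :=
  I ⊆ (S : Set T) ∧ (∀ a ∈ I, ∀ b ∈ S, a + b ∈ I) ∧ (0 : T) ∉ I ∧
    ∀ a ∈ S, ∀ b ∈ S, a + b ∈ I → a ∈ I ∨ b ∈ I

lemma prime_nsmul_mem {q : Set T} (hq : IsMonoidPrimeIdeal q) {t : T} (ht : t ∈ q)
    {n : ℕ} (hn : 0 < n) : n • t ∈ q := by
  obtain ⟨m, rfl⟩ := Nat.exists_eq_succ_of_ne_zero hn.ne'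
  rw [succ_nsmul']
  exact hq.1 t ht _

lemma prime_mem_of_nsmul_mem {q : Set T} (hq : IsMonoidPrimeIdeal q) {t : T}
    {n : ℕ} (hn : 0 < n) (h : n • t ∈ q) : t ∈ q := by
  induction n with
  | zero => exact absurd hn (lt_irrefl 0)
  | succ n ih =>
    rcases Nat.eq_zero_or_pos n with rfl | hn'
    · simpa using h
    · rw [succ_nsmul'] at h
      rcases hq.2.2 _ _ h with h' | h'
      · exact h'
      · exact ih hn' h'

lemma primeOn_nsmul_mem {S : AddSubmonoid T} {p : Set T} (hp : IsMonoidPrimeIdealOn S p)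
    {t : T} (ht : t ∈ p) {n : ℕ} (hn : 0 < n) : n • t ∈ p := by
  obtain ⟨m, rfl⟩ := Nat.exists_eq_succ_of_ne_zero hn.ne'
  rw [succ_nsmul']
  exact hp.2.1 t ht _ (AddSubmonoid.nsmul_mem S (hp.1 ht) m)

lemma primeOn_mem_of_nsmul_mem {S : AddSubmonoid T} {p : Set T}
    (hp : IsMonoidPrimeIdealOn S p) {t : T} (hts : t ∈ S)
    {n : ℕ} (hn : 0 < n) (h : n • t ∈ p) : t ∈ p := by
  induction n with
  | zero => exact absurd hn (lt_irrefl 0)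
  | succ n ih =>
    rcases Nat.eq_zero_or_pos n with rfl | hn'
    · simpa using h
    · rw [succ_nsmul'] at h
      rcases hp.2.2.2 t hts _ (AddSubmonoid.nsmul_mem S hts n) h with h' | h'
      · exact h'
      · exact ih hn' h'

/-- Let `S ⊆ T` be a root extension of commutative cancellative monoids (every
`t ∈ T` has a positive multiple in `S`). Then `q ↦ q ∩ S` is an inclusion-preserving
bijection from the prime ideals of `T` onto the prime ideals of `S`. -/
theorem stmt12 (S : AddSubmonoid T) (hroot : ∀ t : T, ∃ n : ℕ, 0 < n ∧ n • t ∈ S) :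
    Set.BijOn (fun q : Set T => q ∩ (S : Set T))
        {q : Set T | IsMonoidPrimeIdeal q} {p : Set T | IsMonoidPrimeIdealOn S p} ∧
      ∀ q q' : Set T, IsMonoidPrimeIdeal q → IsMonoidPrimeIdeal q' →
        (q ⊆ q' ↔ q ∩ (S : Set T) ⊆ q' ∩ (S : Set T)) := by
  -- key: inclusion detection
  have key : ∀ q q' : Set T, IsMonoidPrimeIdeal q → IsMonoidPrimeIdeal q' →
      q ∩ (S : Set T) ⊆ q' ∩ (S : Set T) → q ⊆ q' := by
    intro q q' hq hq' hsub t ht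
    obtain ⟨n, hn, hnS⟩ := hroot t
    have hnq : n • t ∈ q ∩ (S : Set T) := ⟨prime_nsmul_mem hq ht hn, hnS⟩
    exact prime_mem_of_nsmul_mem hq' hn (hsub hnq).1
  have mapsTo : ∀ q : Set T, IsMonoidPrimeIdeal q →
      IsMonoidPrimeIdealOn S (q ∩ (S : Set T)) := by
    intro q hq
    refine ⟨Set.inter_subset_right, ?_, fun h => hq.2.1 h.1, ?_⟩
    · intro a ha b hb
      exact ⟨hq.1 a ha.1 b, S.add_mem ha.2 hb⟩
    · intro a haS b hbS hab
      rcases hq.2.2 a b hab.1 with h | h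
      · exact Or.inl ⟨h, haS⟩
      · exact Or.inr ⟨h, hbS⟩
  refine ⟨⟨fun q hq => mapsTo q hq, ?_, ?_⟩, ?_⟩
  · -- injective
    intro q hq q' hq' h
    exact Set.Subset.antisymm (key q q' hq hq' h.le) (key q' q hq' hq h.ge)
  · -- surjective
    intro p hp
    set q : Set T := {t : T | ∃ n : ℕ, 0 < n ∧ n • t ∈ p} with hqdef
    have hqprime : IsMonoidPrimeIdeal q := by
      refine ⟨?_, ?_, ?_⟩
      · rintro a ⟨n, hn, hna⟩ b
        obtain ⟨m, hm, hmb⟩ := hroot b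
        refine ⟨n * m, Nat.mul_pos hn hm, ?_⟩
        rw [smul_add, mul_nsmul, mul_nsmul, smul_comm m n b]
        exact hp.2.1 _ (primeOn_nsmul_mem hp hna hm) _ (AddSubmonoid.nsmul_mem S hmb n)
      · rintro ⟨n, hn, hn0⟩
        exact hp.2.2.1 (by simpa using hn0)
      · intro a b hab
        obtain ⟨n, hn, hnab⟩ := hab
        obtain ⟨k, hk, hka⟩ := hroot a
        obtain ⟨l, hl, hlb⟩ := hroot b
        have haS : (n * (k * l)) • a ∈ S := by
          rw [show n * (k * l) = k * (n * l) by ring, mul_nsmul]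
          exact AddSubmonoid.nsmul_mem S hka _
        have hbS : (n * (k * l)) • b ∈ S := by
          rw [show n * (k * l) = l * (n * k) by ring, mul_nsmul]
          exact AddSubmonoid.nsmul_mem S hlb _
        have habp : (n * (k * l)) • (a + b) ∈ p := by
          rw [mul_nsmul]
          exact primeOn_nsmul_mem hp hnab (Nat.mul_pos hk hl)
        rw [smul_add] at habp
        have hpos : 0 < n * (k * l) := Nat.mul_pos hn (Nat.mul_pos hk hl)
        rcases hp.2.2.2 _ haS _ hbS habp with h | h
        · exact Or.inl ⟨_, hpos, h⟩
        · exact Or.inr ⟨_, hpos, h⟩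
    refine ⟨q, hqprime, ?_⟩
    show q ∩ (S : Set T) = p
    ext t
    constructor
    · rintro ⟨⟨n, hn, hnt⟩, htS⟩
      exact primeOn_mem_of_nsmul_mem hp htS hn hnt
    · intro ht
      exact ⟨⟨1, Nat.one_pos, by simpa using ht⟩, hp.1 ht⟩
  · intro q q' hq hq'
    exact ⟨fun h => Set.inter_subset_inter_left _ h, key q q' hq hq'⟩
end

section
/- Let D be a Mori domain with complete integral closure D̂. Then Reg(D) = {a ∈ D | ∀ z ∈ D̂, z·a ∈ D ⟹ z ∈ D} is a saturated submonoid of the multiplicative monoid (D̂ \ {0}, ·): if a, b ∈ Reg(D), z ∈ D̂ \ {0}, and a·z = b, then z ∈ Reg(D). -/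
open FractionalIdeal
open scoped nonZeroDivisors

/-- Let `D` be a Mori domain (ACC on divisorial ideals) with complete integral
closure `D̂` inside its quotient field. Then the monoid of regular elements
`Reg(D) = {a ∈ D | ∀ z ∈ D̂, z·a ∈ D → z ∈ D}` is a saturated submonoid of
`(D̂ \ {0}, ·)`: if `a, b ∈ Reg(D)`, `z ∈ D̂ \ {0}` and `a·z = b`, then `z ∈ Reg(D)`. -/
theorem stmt14 (D : Type*) [CommRing D] [IsDomain D]
    -- the Mori hypothesis: the ascending chain condition on divisorial ideals
    (hMori : ∀ f : ℕ →o FractionalIdeal D⁰ (FractionRing D),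
      (∀ n, f n ≤ 1 ∧ ((f n)⁻¹)⁻¹ = f n) → ∃ N, ∀ n, N ≤ n → f n = f N)
    -- the image of `D` in its quotient field
    (D' : Set (FractionRing D)) (hD' : D' = Set.range (algebraMap D (FractionRing D)))
    -- the complete integral closure of `D`
    (hatD : Set (FractionRing D)) (hhatD : hatD = {x | ∃ c : D, c ≠ 0 ∧
      ∀ n : ℕ, algebraMap D (FractionRing D) c * x ^ n ∈ D'})
    -- the monoid of regular elements of `D`
    (Reg : Set (FractionRing D)) (hReg : Reg = {a | a ∈ D' ∧
      ∀ z ∈ hatD, z * a ∈ D' → z ∈ D'}) :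
    ∀ a b z : FractionRing D, a ∈ Reg → b ∈ Reg → z ∈ hatD → z ≠ 0 → a * z = b →
      z ∈ Reg := by
  intro a b z ha hb hz _ hab
  rw [hReg] at ha hb ⊢
  obtain ⟨haD, haR⟩ := ha
  obtain ⟨hbD, hbR⟩ := hb
  have hmul : ∀ x y : FractionRing D, x ∈ D' → y ∈ D' → x * y ∈ D' := by
    intro x y hx hy
    rw [hD'] at hx hy ⊢
    obtain ⟨u, rfl⟩ := hx
    obtain ⟨v, rfl⟩ := hy
    exact ⟨u * v, map_mul _ _ _⟩
  have hzD : z ∈ D' := haR z hz (by rw [mul_comm, hab]; exact hbD)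
  refine ⟨hzD, fun w hw hwz => ?_⟩
  apply hbR w hw
  have : w * b = (w * z) * a := by rw [← hab]; ring
  rw [this]
  exact hmul _ _ hwz haD
end

section
/- Let K be a field, S an affine monoid with factorial complete integral closure Ŝ = ℕ₀^s ⊕ ℤ^t, conductor f_S = (S : Ŝ), and Reg = Reg(K[S]). Let f ∈ K[Ŝ] be such that f·h ∈ Reg for some h ∈ K[Ŝ], and let i ∈ [1, s] be such that the height-one prime p_i = {α ∈ S | π_i(α) ≠ 0} contains f_S. Then the variable X_i does not divide f in K[Ŝ] = K[X_1,…,X_s, Y_1^{±1},…,Y_t^{±1}]. -/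
/-- Let `K` be a field and `S` an affine monoid with factorial complete integral
closure `Ŝ = ℕ₀^s ⊕ ℤ^t`, realized as a submonoid of the group
`G = ℤ^s ⊕ ℤ^t` with `Ŝ = N = {x | x.1 i ≥ 0 for all i}`.  Work inside
`K[Ŝ] = K[X_1,…,X_s,Y_1^{±1},…,Y_t^{±1}] ⊆ K[G]`, i.e. the set `KN` of elements of
the monoid algebra `K[G]` supported on `N`, and let `KS ⊆ K[G]` be the monoid
algebra `K[S]`, `Reg` its monoid of regular elements, and `f_S = (S : Ŝ)` the
conductor.  If `f ∈ K[Ŝ]` satisfies `f·h ∈ Reg` for some `h ∈ K[Ŝ]`, and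
`i ∈ [1,s]` is such that the height-one prime `p_i = {α ∈ S | π_i(α) ≠ 0}` contains
`f_S` (equivalently, `π_i` is nonzero on `f_S`), then the variable `X_i` does not
divide `f` in `K[Ŝ]`. -/
theorem stmt18 (K : Type*) [Field K] (s t : ℕ)
    (S : AddSubmonoid ((Fin s → ℤ) × (Fin t → ℤ)))
    -- `S` is an affine monoid …
    (hfg : S.FG)
    -- … with quotient group all of `G = ℤ^s ⊕ ℤ^t` …
    (hq : AddSubgroup.closure (S : Set ((Fin s → ℤ) × (Fin t → ℤ))) = ⊤)
    -- … whose complete integral closure is `Ŝ = N ≅ ℕ₀^s ⊕ ℤ^t`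
    (N : AddSubmonoid ((Fin s → ℤ) × (Fin t → ℤ)))
    (hN : (N : Set ((Fin s → ℤ) × (Fin t → ℤ))) = {x | ∀ i : Fin s, 0 ≤ x.1 i})
    (hSN : (S : Set ((Fin s → ℤ) × (Fin t → ℤ))) ⊆ N)
    (hcic : {x : (Fin s → ℤ) × (Fin t → ℤ) | ∃ c ∈ S, ∀ n : ℕ, c + n • x ∈ S}
      = (N : Set ((Fin s → ℤ) × (Fin t → ℤ))))
    -- the monoid algebras `K[S] ⊆ K[Ŝ]` inside `K[G]`
    (KS KN : Set (AddMonoidAlgebra K ((Fin s → ℤ) × (Fin t → ℤ))))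
    (hKS : KS = {p | ∀ g, p.coeff g ≠ 0 → g ∈ S})
    (hKN : KN = {p | ∀ g, p.coeff g ≠ 0 → g ∈ N})
    -- the monoid of regular elements of `K[S]`
    (Reg : Set (AddMonoidAlgebra K ((Fin s → ℤ) × (Fin t → ℤ))))
    (hReg : Reg = {a | a ∈ KS ∧ ∀ z ∈ KN, z * a ∈ KS → z ∈ KS})
    -- the conductor `f_S = (S : Ŝ)`
    (fS : Set ((Fin s → ℤ) × (Fin t → ℤ)))
    (hfS : fS = {g | ∀ y ∈ N, g + y ∈ S})
    -- an index `i` such that `p_i = {α ∈ S | π_i(α) ≠ 0} ⊇ f_S`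
    (i : Fin s) (hpi : ∀ g ∈ fS, g.1 i ≠ 0)
    -- `f ∈ K[Ŝ]` with `f·h ∈ Reg(K[S])` for some `h ∈ K[Ŝ]`
    (f h : AddMonoidAlgebra K ((Fin s → ℤ) × (Fin t → ℤ)))
    (hf : f ∈ KN) (hh : h ∈ KN) (hfh : f * h ∈ Reg) :
    -- then `X_i` does not divide `f` in `K[Ŝ]`
    ¬ ∃ q ∈ KN, f = AddMonoidAlgebra.single ((Pi.single i 1 : Fin s → ℤ), (0 : Fin t → ℤ)) (1 : K) * q := by
  rintro ⟨q, hqKN, hfq⟩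
  
  set e : (Fin s → ℤ) × (Fin t → ℤ) := ((Pi.single i 1 : Fin s → ℤ), (0 : Fin t → ℤ)) with he
  -- basic membership facts
  have hmemN : ∀ x : (Fin s → ℤ) × (Fin t → ℤ), (∀ j, 0 ≤ x.1 j) → x ∈ N := by
    intro x hx; rw [← SetLike.mem_coe, hN]; exact hx
  have hNge : ∀ x, x ∈ N → ∀ j, 0 ≤ x.1 j := by
    intro x hx j
    rw [← SetLike.mem_coe, hN] at hx; exact hx j
  have h0N : (0 : (Fin s → ℤ) × (Fin t → ℤ)) ∈ N := hmemN 0 (by intro j; simp)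
  have hfS_S : ∀ c ∈ fS, c ∈ S := by
    intro c hc
    rw [hfS] at hc
    simpa using hc 0 h0N
  have hfS_pos : ∀ c ∈ fS, 1 ≤ c.1 i := by
    intro c hc
    have h1 := hNge c (hSN (hfS_S c hc)) i
    have h2 := hpi c hc
    omega
  -- KN is closed under multiplication
  have hKNmul : ∀ p r : AddMonoidAlgebra K ((Fin s → ℤ) × (Fin t → ℤ)), p ∈ KN → r ∈ KN → p * r ∈ KN := by
    intro p r hp hr
    rw [hKN] at hp hr ⊢
    intro g hg
    classical
    have hg' : g ∈ (p * r).coeff.support := Finsupp.mem_support_iff.mpr hg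
    rcases Finset.mem_add.mp (AddMonoidAlgebra.support_coeff_mul_subset p r hg') with ⟨a, ha, b, hb, rfl⟩
    exact N.add_mem (hp a (Finsupp.mem_support_iff.mp ha)) (hr b (Finsupp.mem_support_iff.mp hb))
  -- conductor absorbs K[N]
  have hcond : ∀ c ∈ fS, ∀ p ∈ KN, (AddMonoidAlgebra.single c (1:K)) * p ∈ KS := by
    intro c hc p hp
    rw [hKS]; rw [hKN] at hp; rw [hfS] at hc
    intro g hg
    rw [AddMonoidAlgebra.coeff_single_mul_apply, one_mul] at hg
    have hgN : -c + g ∈ N := hp _ hg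
    simpa using hc _ hgN
  -- the key step: for every c in the conductor, c - e ∈ S
  have stepS : ∀ c ∈ fS, c - e ∈ S := by
    intro c hc
    have hci := hfS_pos c hc
    have hcN := hSN (hfS_S c hc)
    set z := AddMonoidAlgebra.single (c - e) (1:K) with hz
    have hzKN : z ∈ KN := by
      rw [hKN]
      intro g hg
      have hgc : g = c - e := by
        by_contra hne
        exact hg (Finsupp.single_eq_of_ne hne)
      subst hgc
      apply hmemN
      intro j
      rcases eq_or_ne j i with rfl | hj
      · simpa [he] using hci
      · have := hNge c hcN j
        simpa [he, Pi.single_apply, hj] using this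
    have hmul : z * (f * h) = AddMonoidAlgebra.single c (1:K) * (q * h) := by
      rw [hfq, hz]
      rw [show AddMonoidAlgebra.single (c - e) (1:K) * (AddMonoidAlgebra.single e (1:K) * q * h)
          = (AddMonoidAlgebra.single (c - e) (1:K) * AddMonoidAlgebra.single e (1:K)) * (q * h) from by
        ring]
      rw [AddMonoidAlgebra.single_mul_single, one_mul, sub_add_cancel]
    have hzKS : z ∈ KS := by
      rw [hReg] at hfh
      exact hfh.2 z hzKN (by rw [hmul]; exact hcond c hc _ (hKNmul q h hqKN hh))
    rw [hKS] at hzKS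
    apply hzKS (c - e)
    rw [hz]
    simpa using (one_ne_zero : (1:K) ≠ 0)
  -- hence the conductor is stable under subtracting e
  have stepfS : ∀ c ∈ fS, c - e ∈ fS := by
    intro c hc
    rw [hfS]
    intro y hy
    have h1 : c + y ∈ fS := by
      rw [hfS] at hc ⊢
      intro y' hy'
      rw [add_assoc]
      exact hc _ (N.add_mem hy hy')
    have h2 := stepS _ h1
    have : c - e + y = c + y - e := by abel
    rw [this]; exact h2
  -- the conductor is nonempty
  have key : ∀ v, v ∈ N → ∃ c ∈ S, ∀ n : ℕ, c + n • v ∈ S := by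
    intro v hv
    have : v ∈ {x : (Fin s → ℤ) × (Fin t → ℤ) | ∃ c ∈ S, ∀ n : ℕ, c + n • x ∈ S} := by rw [hcic]; exact hv
    exact this
  have hgen1 : ∀ j : Fin s, (((Pi.single j 1 : Fin s → ℤ), (0 : Fin t → ℤ)) : (Fin s → ℤ) × (Fin t → ℤ)) ∈ N := by
    intro j; apply hmemN; intro x
    simp [Pi.single_apply]
    split <;> norm_num
  have hgen2 : ∀ j : Fin t, (((0 : Fin s → ℤ), (Pi.single j 1 : Fin t → ℤ)) : (Fin s → ℤ) × (Fin t → ℤ)) ∈ N := by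
    intro j; apply hmemN; intro x; simp
  have hgen3 : ∀ j : Fin t, (((0 : Fin s → ℤ), -(Pi.single j 1 : Fin t → ℤ)) : (Fin s → ℤ) × (Fin t → ℤ)) ∈ N := by
    intro j; apply hmemN; intro x; simp
  choose ce hceS hce using fun j : Fin s => key _ (hgen1 j)
  choose cp hcpS hcp using fun j : Fin t => key _ (hgen2 j)
  choose cm hcmS hcm using fun j : Fin t => key _ (hgen3 j)
  obtain ⟨c0, hc0⟩ : ∃ c, c ∈ fS := by
    refine ⟨(∑ j, ce j) + (∑ j, cp j) + (∑ j, cm j), ?_⟩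
    rw [hfS]
    intro y hy
    have hdec : (∑ j, ce j) + (∑ j, cp j) + (∑ j, cm j) + y =
        (∑ j, (ce j + ((y.1 j).toNat) • (((Pi.single j 1 : Fin s → ℤ), (0 : Fin t → ℤ)) : (Fin s → ℤ) × (Fin t → ℤ))))
        + (∑ j, (cp j + ((y.2 j).toNat) • (((0 : Fin s → ℤ), (Pi.single j 1 : Fin t → ℤ)) : (Fin s → ℤ) × (Fin t → ℤ))))
        + (∑ j, (cm j + ((-(y.2 j)).toNat) • (((0 : Fin s → ℤ), -(Pi.single j 1 : Fin t → ℤ)) : (Fin s → ℤ) × (Fin t → ℤ)))) := by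
      rw [Finset.sum_add_distrib, Finset.sum_add_distrib, Finset.sum_add_distrib]
      have hyeq : y =
          (∑ j, ((y.1 j).toNat) • (((Pi.single j 1 : Fin s → ℤ), (0 : Fin t → ℤ)) : (Fin s → ℤ) × (Fin t → ℤ)))
          + (∑ j, ((y.2 j).toNat) • (((0 : Fin s → ℤ), (Pi.single j 1 : Fin t → ℤ)) : (Fin s → ℤ) × (Fin t → ℤ)))
          + (∑ j, ((-(y.2 j)).toNat) • (((0 : Fin s → ℤ), -(Pi.single j 1 : Fin t → ℤ)) : (Fin s → ℤ) × (Fin t → ℤ))) := by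
        have h1 : ∀ j, ((y.1 j).toNat : ℤ) = y.1 j := fun j => Int.toNat_of_nonneg (hNge y hy j)
        apply Prod.ext
        · simp only [Prod.fst_add, Prod.fst_sum, Prod.smul_fst]
          funext x
          simp only [Finset.sum_apply, Pi.add_apply, Pi.smul_apply, Pi.single_apply,
            Pi.neg_apply, Pi.zero_apply, smul_eq_mul, mul_ite, mul_one, mul_zero, mul_neg,
            smul_ite, smul_zero, smul_neg]
          simp only [Finset.sum_const_zero, add_zero, Finset.sum_ite_eq, Finset.mem_univ,
            if_true, nsmul_eq_mul, mul_one]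
          have := hNge y hy x
          omega
        · simp only [Prod.snd_add, Prod.snd_sum, Prod.smul_snd]
          funext x
          simp only [Finset.sum_apply, Pi.add_apply, Pi.smul_apply, Pi.single_apply,
            Pi.neg_apply, Pi.zero_apply, smul_eq_mul, mul_ite, mul_one, mul_zero, mul_neg,
            smul_ite, smul_zero, smul_neg]
          simp only [Finset.sum_const_zero, zero_add, Finset.sum_ite_eq, Finset.mem_univ,
            if_true, nsmul_eq_mul, mul_one, Finset.sum_neg_distrib, neg_neg]
          omega
      conv_lhs => rw [hyeq]
      abel
    rw [hdec]
    exact S.add_mem (S.add_mem (AddSubmonoid.sum_mem S fun j _ => hce j _)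
      (AddSubmonoid.sum_mem S fun j _ => hcp j _)) (AddSubmonoid.sum_mem S fun j _ => hcm j _)
  -- iterate stepfS
  have hiter : ∀ k : ℕ, c0 - k • e ∈ fS := by
    intro k
    induction k with
    | zero => simpa using hc0
    | succ n ih =>
      have h2 := stepfS _ ih
      have : c0 - (n + 1 : ℕ) • e = c0 - n • e - e := by
        rw [add_smul, one_smul]; abel
      rw [this]; exact h2
  -- derive the contradiction
  set k := (c0.1 i).toNat with hk
  have hc1 := hiter k
  have hzero : (c0 - k • e).1 i = 0 := by
    have hnn : 0 ≤ c0.1 i := hNge c0 (hSN (hfS_S c0 hc0)) i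
    have : ((k • e : (Fin s → ℤ) × (Fin t → ℤ))).1 i = (k : ℤ) := by
      simp [he]
    simp only [Prod.fst_sub, Pi.sub_apply, this]
    omega
  exact hpi _ hc1 hzero
end
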